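/- Suppose ω ≥ 1 and the hypotheses of the coarse and local estimates hold: (i) (R₀ᵀv₀)ᵀ(R₀ᵀw₀) = v₀ᵀw₀ for all v₀, w₀; (ii) ‖R₀ᵀv₀‖²_A ≤ ω·v₀ᵀB₀v₀ for all v₀; (iii) λ₁‖w‖² ≤ ‖w‖²_A for all w; (iv) A u₁ = λ₁u₁ with ‖u₁‖_A = 1; (v) B₀u₀ = λ₀u₀ with ‖u₀‖ = 1 and w₀ᵀB₀⁻¹w₀ ≤ λ₀⁻¹‖w₀‖² for all w₀; (vi) for i = 1,…,N, ‖R_iᵀv_i‖²_A ≤ ω·v_iᵀB_iv_i and v_iᵀB_i⁻¹v_i ≤ C_P‖v_i‖² for all v_i, ‖Σ_i R_iᵀv_i‖²_A ≤ N₀·Σ_i‖R_iᵀv_i‖²_A for all choices of v_i, and Σ_i‖R_iu‖² ≤ C_a‖u‖² for all u. Let C = R₀ᵀB₀⁻¹R₀ + Σ_{i=1}^N R_iᵀB_i⁻¹R_i be the additive Schwarz preconditioner (C = B⁻¹), assumed positive definite. Then ν₁ := u₁ᵀA C A u₁ / (u₁ᵀA u₁) satisfies ν₁ ≤ λ₀⁻¹λ₁·(ω·λ₁^{−1/2}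 + 1)·C_c + λ₁^{1/2}·(ω·N₀·C_a·C_P)^{1/2} + λ₀⁻¹λ₁, where C_c = min over α ∈ ℝ of ‖u₁ − α·R₀ᵀu₀‖_A. -/

import Mathlib

open Matrix

private lemma dp_self_nonneg {k : ℕ} (v : Fin k → ℝ) : 0 ≤ v ⬝ᵥ v :=
  Finset.sum_nonneg (fun i _ => mul_self_nonneg _)

private lemma move_transpose {m k : ℕ} (M : Matrix (Fin m) (Fin k) ℝ)
    (x : Fin m → ℝ) (y : Fin k → ℝ) :
    (Mᵀ *ᵥ x) ⬝ᵥ y = x ⬝ᵥ (M *ᵥ y) := by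
  rw [Matrix.mulVec_transpose, ← Matrix.dotProduct_mulVec]

private theorem cs_psd {n : ℕ} (A : Matrix (Fin n) (Fin n) ℝ) (hA : A.PosSemidef)
    (x y : Fin n → ℝ) :
    (x ⬝ᵥ A *ᵥ y) ^ 2 ≤ (x ⬝ᵥ A *ᵥ x) * (y ⬝ᵥ A *ᵥ y) := by
  have hAt : Aᵀ = A := hA.1
  have hsym : ∀ u v : Fin n → ℝ, u ⬝ᵥ A *ᵥ v = v ⬝ᵥ A *ᵥ u := by
    intro u v
    rw [← move_transpose A u v, hAt, dotProduct_comm]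
  have key : ∀ t : ℝ, 0 ≤ (y ⬝ᵥ A *ᵥ y) * (t * t) + (2 * (x ⬝ᵥ A *ᵥ y)) * t + (x ⬝ᵥ A *ᵥ x) := by
    intro t
    have h0 := hA.dotProduct_mulVec_nonneg (x + t • y)
    rw [star_trivial] at h0
    have hexp : (x + t • y) ⬝ᵥ A *ᵥ (x + t • y)
        = (y ⬝ᵥ A *ᵥ y) * (t * t) + (2 * (x ⬝ᵥ A *ᵥ y)) * t + (x ⬝ᵥ A *ᵥ x) := by
      rw [Matrix.mulVec_add, Matrix.mulVec_smul, add_dotProduct,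
        dotProduct_add, dotProduct_add, smul_dotProduct,
        dotProduct_smul, dotProduct_smul, hsym y x]
      simp [smul_eq_mul]; ring
    rw [← hexp]; exact h0
  have hd := discrim_le_zero key
  have heq : discrim (y ⬝ᵥ A *ᵥ y) (2 * (x ⬝ᵥ A *ᵥ y)) (x ⬝ᵥ A *ᵥ x)
      = 4 * (x ⬝ᵥ A *ᵥ y) ^ 2 - 4 * (x ⬝ᵥ A *ᵥ x) * (y ⬝ᵥ A *ᵥ y) := by
    unfold discrim; ring
  rw [heq] at hd
  nlinarith [hd]

private lemma sum_mulVec' {m k : ℕ} (M : Fin k → Matrix (Fin m) (Fin m) ℝ) (g : Fin m → ℝ) :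
    (∑ i, M i) *ᵥ g = ∑ i, M i *ᵥ g :=
  map_sum (Matrix.mulVec.addMonoidHomLeft g) M Finset.univ

private lemma dotProduct_sum' {m k : ℕ} (f : Fin k → (Fin m → ℝ)) (g : Fin m → ℝ) :
    g ⬝ᵥ (∑ i, f i) = ∑ i, g ⬝ᵥ f i := by
  simp only [dotProduct, Finset.sum_apply, Finset.mul_sum]
  exact Finset.sum_comm

private lemma cs_dot {k : ℕ} (a b : Fin k → ℝ) :
    (a ⬝ᵥ b) ^ 2 ≤ (a ⬝ᵥ a) * (b ⬝ᵥ b) := by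
  simpa [Matrix.one_mulVec] using cs_psd 1 Matrix.PosSemidef.one a b

/-- Bound on ν₁ for the additive Schwarz preconditioner. -/
theorem statement_18 {n n₀ N : ℕ} (ni : Fin N → ℕ)
    (A : Matrix (Fin n) (Fin n) ℝ) (hA : A.PosDef)
    (lam₁ : ℝ) (hlam₁ : 0 < lam₁)
    (R0t : Matrix (Fin n) (Fin n₀) ℝ)
    (B0 : Matrix (Fin n₀) (Fin n₀) ℝ) (hB0 : B0.PosDef)
    (Rt : ∀ i : Fin N, Matrix (Fin n) (Fin (ni i)) ℝ)
    (B : ∀ i : Fin N, Matrix (Fin (ni i)) (Fin (ni i)) ℝ)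
    (hB : ∀ i, (B i).PosDef)
    (ω lam₀ CP N₀ Ca : ℝ) (hω : 1 ≤ ω) (hlam₀ : 0 < lam₀)
    (hCP : 0 < CP) (hN₀ : 0 < N₀) (hCa : 0 < Ca)
    (u₁ : Fin n → ℝ) (u₀ : Fin n₀ → ℝ)
    (hiso : ∀ v₀ w₀ : Fin n₀ → ℝ, (R0t *ᵥ v₀) ⬝ᵥ (R0t *ᵥ w₀) = v₀ ⬝ᵥ w₀)
    (hstab0 : ∀ v₀ : Fin n₀ → ℝ, (R0t *ᵥ v₀) ⬝ᵥ A *ᵥ (R0t *ᵥ v₀) ≤ ω * (v₀ ⬝ᵥ B0 *ᵥ v₀))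
    (hpoin : ∀ w : Fin n → ℝ, lam₁ * (w ⬝ᵥ w) ≤ w ⬝ᵥ A *ᵥ w)
    (heig : A *ᵥ u₁ = lam₁ • u₁) (hu₁A : u₁ ⬝ᵥ A *ᵥ u₁ = 1)
    (heig₀ : B0 *ᵥ u₀ = lam₀ • u₀) (hu₀ : u₀ ⬝ᵥ u₀ = 1)
    (hB0inv : ∀ w₀ : Fin n₀ → ℝ, w₀ ⬝ᵥ B0⁻¹ *ᵥ w₀ ≤ lam₀⁻¹ * (w₀ ⬝ᵥ w₀))
    (hstab : ∀ (i : Fin N) (vi : Fin (ni i) → ℝ),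
      (Rt i *ᵥ vi) ⬝ᵥ A *ᵥ (Rt i *ᵥ vi) ≤ ω * (vi ⬝ᵥ B i *ᵥ vi))
    (hBinv : ∀ (i : Fin N) (vi : Fin (ni i) → ℝ),
      vi ⬝ᵥ (B i)⁻¹ *ᵥ vi ≤ CP * (vi ⬝ᵥ vi))
    (hcover : ∀ v : (i : Fin N) → (Fin (ni i) → ℝ),
      (∑ i, Rt i *ᵥ v i) ⬝ᵥ A *ᵥ (∑ i, Rt i *ᵥ v i) ≤
        N₀ * ∑ i, (Rt i *ᵥ v i) ⬝ᵥ A *ᵥ (Rt i *ᵥ v i))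
    (hCa2 : ∀ w : Fin n → ℝ, ∑ i, ((Rt i)ᵀ *ᵥ w) ⬝ᵥ ((Rt i)ᵀ *ᵥ w) ≤ Ca * (w ⬝ᵥ w))
    (C : Matrix (Fin n) (Fin n) ℝ)
    (hC : C = R0t * B0⁻¹ * R0tᵀ + ∑ i, Rt i * (B i)⁻¹ * (Rt i)ᵀ)
    (hCpd : C.PosDef)
    (ν₁ : ℝ) (hν₁ : ν₁ = (u₁ ⬝ᵥ (A * C * A) *ᵥ u₁) / (u₁ ⬝ᵥ A *ᵥ u₁))
    (Cc : ℝ)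
    (hCc : Cc = ⨅ α : ℝ, Real.sqrt
      ((u₁ - α • (R0t *ᵥ u₀)) ⬝ᵥ A *ᵥ (u₁ - α • (R0t *ᵥ u₀)))) :
    ν₁ ≤ lam₀⁻¹ * lam₁ * (ω / Real.sqrt lam₁ + 1) * Cc +
        Real.sqrt lam₁ * Real.sqrt (ω * N₀ * Ca * CP) + lam₀⁻¹ * lam₁ := by
  have hAt : Aᵀ = A := hA.1
  set g : Fin n → ℝ := A *ᵥ u₁ with hgdef
  -- ν₁ = g ⬝ᵥ C *ᵥ g
  have hnu : ν₁ = g ⬝ᵥ (C *ᵥ g) := by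
    rw [hν₁, hu₁A, div_one]
    have h1 : (A * C * A) *ᵥ u₁ = A *ᵥ (C *ᵥ g) := by
      rw [hgdef, Matrix.mulVec_mulVec, Matrix.mulVec_mulVec, Matrix.mul_assoc]
    rw [h1, ← move_transpose A u₁ (C *ᵥ g), hAt]
  set w0 : Fin n₀ → ℝ := R0tᵀ *ᵥ g with hw0def
  set w : (i : Fin N) → Fin (ni i) → ℝ := fun i => (Rt i)ᵀ *ᵥ g with hwdef
  -- split ν₁
  have hsplit : ν₁ = w0 ⬝ᵥ (B0⁻¹ *ᵥ w0) + ∑ i, (w i) ⬝ᵥ ((B i)⁻¹ *ᵥ (w i)) := by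
    rw [hnu, hC, Matrix.add_mulVec, sum_mulVec', dotProduct_add,
      dotProduct_sum']
    congr 1
    · rw [show (R0t * B0⁻¹ * R0tᵀ) *ᵥ g = R0t *ᵥ (B0⁻¹ *ᵥ (R0tᵀ *ᵥ g)) by
        simp only [Matrix.mulVec_mulVec, Matrix.mul_assoc],
        ← move_transpose R0t g (B0⁻¹ *ᵥ (R0tᵀ *ᵥ g))]
    · refine Finset.sum_congr rfl (fun i _ => ?_)
      rw [show (Rt i * (B i)⁻¹ * (Rt i)ᵀ) *ᵥ g = Rt i *ᵥ ((B i)⁻¹ *ᵥ ((Rt i)ᵀ *ᵥ g)) by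
        simp only [Matrix.mulVec_mulVec, Matrix.mul_assoc],
        ← move_transpose (Rt i) g ((B i)⁻¹ *ᵥ ((Rt i)ᵀ *ᵥ g))]
  -- g ⬝ᵥ g ≤ lam₁
  have hgu : g = lam₁ • u₁ := heig
  have hgg : g ⬝ᵥ g ≤ lam₁ := by
    have h1 : g ⬝ᵥ g = lam₁ * (lam₁ * (u₁ ⬝ᵥ u₁)) := by
      rw [hgu, smul_dotProduct, dotProduct_smul]
      simp [smul_eq_mul]
      try ring
    have h2 : lam₁ * (u₁ ⬝ᵥ u₁) ≤ 1 := by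
      have := hpoin u₁; rw [hu₁A] at this; exact this
    rw [h1]
    calc lam₁ * (lam₁ * (u₁ ⬝ᵥ u₁)) ≤ lam₁ * 1 :=
          mul_le_mul_of_nonneg_left h2 hlam₁.le
      _ = lam₁ := mul_one lam₁
  have hggnn : 0 ≤ g ⬝ᵥ g := dp_self_nonneg g
  -- coarse term bound
  have hw0g : w0 ⬝ᵥ w0 ≤ g ⬝ᵥ g := by
    have h1 : w0 ⬝ᵥ w0 = g ⬝ᵥ (R0t *ᵥ w0) := move_transpose R0t g w0
    have h2 : (g ⬝ᵥ (R0t *ᵥ w0)) ^ 2 ≤ (g ⬝ᵥ g) * (w0 ⬝ᵥ w0) := by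
      have := cs_dot g (R0t *ᵥ w0)
      rwa [hiso w0 w0] at this
    rw [← h1] at h2
    rcases eq_or_lt_of_le (dp_self_nonneg w0) with h | h
    · rw [← h]; exact hggnn
    · nlinarith [h2, h]
  have hT : w0 ⬝ᵥ (B0⁻¹ *ᵥ w0) ≤ lam₀⁻¹ * lam₁ := by
    calc w0 ⬝ᵥ (B0⁻¹ *ᵥ w0) ≤ lam₀⁻¹ * (w0 ⬝ᵥ w0) := hB0inv w0
      _ ≤ lam₀⁻¹ * lam₁ := by
          apply mul_le_mul_of_nonneg_left _ (inv_nonneg.mpr hlam₀.le)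
          exact le_trans hw0g hgg
  -- local term
  set S : ℝ := ∑ i, (w i) ⬝ᵥ ((B i)⁻¹ *ᵥ (w i)) with hSdef
  have hSnn : 0 ≤ S := by
    apply Finset.sum_nonneg
    intro i _
    have := ((hB i).inv).posSemidef.dotProduct_mulVec_nonneg (w i)
    simpa using this
  have hSa : S ≤ CP * (Ca * lam₁) := by
    have h1 : S ≤ ∑ i, CP * ((w i) ⬝ᵥ (w i)) :=
      Finset.sum_le_sum (fun i _ => hBinv i (w i))
    have h2 : ∑ i, CP * ((w i) ⬝ᵥ (w i)) = CP * ∑ i, (w i) ⬝ᵥ (w i) := by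
      rw [Finset.mul_sum]
    have h3 : ∑ i, (w i) ⬝ᵥ (w i) ≤ Ca * (g ⬝ᵥ g) := hCa2 g
    have h4 : Ca * (g ⬝ᵥ g) ≤ Ca * lam₁ := mul_le_mul_of_nonneg_left hgg hCa.le
    calc S ≤ CP * ∑ i, (w i) ⬝ᵥ (w i) := by rw [← h2]; exact h1
      _ ≤ CP * (Ca * lam₁) := by
          apply mul_le_mul_of_nonneg_left _ hCP.le
          exact le_trans h3 h4
  -- S^2 ≤ N₀ * ω * S
  set v : (i : Fin N) → Fin (ni i) → ℝ := fun i => (B i)⁻¹ *ᵥ (w i) with hvdef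
  set z : Fin n → ℝ := ∑ i, Rt i *ᵥ v i with hzdef
  have hSz : S = g ⬝ᵥ z := by
    rw [hzdef, dotProduct_sum', hSdef]
    refine Finset.sum_congr rfl (fun i _ => ?_)
    exact move_transpose (Rt i) g (v i)
  have hgzA : g ⬝ᵥ z = u₁ ⬝ᵥ (A *ᵥ z) := by
    have h := move_transpose A u₁ z
    rw [hAt] at h
    rw [hgdef]; exact h
  have hBv : ∀ i, (v i) ⬝ᵥ ((B i) *ᵥ (v i)) = (w i) ⬝ᵥ ((B i)⁻¹ *ᵥ (w i)) := by
    intro i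
    have hinv : B i * (B i)⁻¹ = 1 :=
      Matrix.mul_nonsing_inv (B i) (isUnit_iff_ne_zero.mpr (hB i).det_pos.ne')
    have h1 : (B i) *ᵥ (v i) = w i := by
      rw [hvdef]; dsimp only
      rw [Matrix.mulVec_mulVec, hinv, Matrix.one_mulVec]
    rw [h1, dotProduct_comm]
  have hzz : z ⬝ᵥ (A *ᵥ z) ≤ N₀ * ω * S := by
    have h1 := hcover v
    have h2 : ∑ i, (Rt i *ᵥ v i) ⬝ᵥ A *ᵥ (Rt i *ᵥ v i) ≤ ω * S := by
      calc ∑ i, (Rt i *ᵥ v i) ⬝ᵥ A *ᵥ (Rt i *ᵥ v i)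
          ≤ ∑ i, ω * ((v i) ⬝ᵥ (B i) *ᵥ (v i)) :=
            Finset.sum_le_sum (fun i _ => hstab i (v i))
        _ = ω * ∑ i, (v i) ⬝ᵥ ((B i) *ᵥ (v i)) := by rw [Finset.mul_sum]
        _ = ω * S := by
            rw [hSdef]; congr 1
            exact Finset.sum_congr rfl (fun i _ => hBv i)
    calc z ⬝ᵥ (A *ᵥ z) ≤ N₀ * ∑ i, (Rt i *ᵥ v i) ⬝ᵥ A *ᵥ (Rt i *ᵥ v i) := h1
      _ ≤ N₀ * (ω * S) := mul_le_mul_of_nonneg_left h2 hN₀.le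
      _ = N₀ * ω * S := by ring
  have hSsq : S ^ 2 ≤ N₀ * ω * S := by
    have h1 : S ^ 2 = (u₁ ⬝ᵥ (A *ᵥ z)) ^ 2 := by rw [hSz, hgzA]
    have h2 := cs_psd A hA.posSemidef u₁ z
    rw [hu₁A, one_mul] at h2
    calc S ^ 2 = (u₁ ⬝ᵥ (A *ᵥ z)) ^ 2 := h1
      _ ≤ z ⬝ᵥ (A *ᵥ z) := h2
      _ ≤ N₀ * ω * S := hzz
  -- S ≤ √lam₁ * √(ω N₀ Ca CP)
  set K : ℝ := Real.sqrt lam₁ * Real.sqrt (ω * N₀ * Ca * CP) with hKdef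
  have hKnn : 0 ≤ K := mul_nonneg (Real.sqrt_nonneg _) (Real.sqrt_nonneg _)
  have hωpos : (0:ℝ) < ω := lt_of_lt_of_le one_pos hω
  have hK2 : K ^ 2 = lam₁ * (ω * N₀ * Ca * CP) := by
    rw [hKdef, mul_pow, Real.sq_sqrt hlam₁.le, Real.sq_sqrt (by positivity)]
  have hSK : S ≤ K := by
    have h1 : S ^ 2 ≤ K ^ 2 := by
      have h2 : N₀ * ω * S ≤ N₀ * ω * (CP * (Ca * lam₁)) :=
        mul_le_mul_of_nonneg_left hSa (by positivity)
      rw [hK2]; nlinarith [hSsq, h2]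
    have := Real.sqrt_le_sqrt h1
    rwa [Real.sqrt_sq hSnn, Real.sqrt_sq hKnn] at this
  -- first RHS term is nonnegative
  have hCcnn : 0 ≤ Cc := by
    rw [hCc]
    exact Real.iInf_nonneg (fun α => Real.sqrt_nonneg _)
  have hfirst : 0 ≤ lam₀⁻¹ * lam₁ * (ω / Real.sqrt lam₁ + 1) * Cc := by
    apply mul_nonneg _ hCcnn
    apply mul_nonneg (by positivity)
    have : 0 ≤ ω / Real.sqrt lam₁ := div_nonneg hωpos.le (Real.sqrt_nonneg _)
    linarith
  rw [hsplit]
  have : w0 ⬝ᵥ (B0⁻¹ *ᵥ w0) + S ≤ lam₀⁻¹ * lam₁ + K := add_le_add hT hSK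
  linarith [hfirst, this]
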